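/- arXiv:2106.11807 — 3 statements merged into one kernel-verified Lean document; each statement's English description precedes it below -/
import Mathlib

section
/- Let F be a nonempty finite set (the faces of a mesh element E), let H : F → ℝ be a flux function, let τ > 0 (time step), φ > 0 (porosity), and m > 0 (the measure |E| of the element). Let s ∈ ℝ satisfy s_* ≤ s ≤ s^* and define P⁺ = τ·Σ_{e∈F} max(0, −H(e)), P⁻ = τ·Σ_{e∈F} min(0, −H(e)), Q⁺ = m·φ·(s^* − s), and Q⁻ = m·φ·(s_* − s). Suppose α : F → ℝ satisfies 0 ≤ α(e) ≤ 1 for every e ∈ F, and moreover α(e)·P⁺ ≤ Q⁺ whenever H(e) < 0, and α(e)·P⁻ ≥ Q⁻ whenever H(e) > 0. Then the flux-limited update s' = s − (τ/(φ·m))·Σ_{e∈F} α(e)·H(e) satisfies s_* ≤ s' ≤ s^*. -/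
/-- Key lemma: the limited sum of positive parts is bounded by Q. -/
lemma flux_key {F : Type*} [Fintype F]
    (H α : F → ℝ) (τ Q : ℝ) (hτ : 0 ≤ τ) (hQ : 0 ≤ Q)
    (h : ∀ e, H e < 0 → α e * (τ * ∑ e' : F, max 0 (-(H e'))) ≤ Q) :
    τ * ∑ e : F, α e * max 0 (-(H e)) ≤ Q := by
  by_cases hS : (Finset.univ.filter (fun e => H e < 0)).Nonempty
  · obtain ⟨e₀, he₀, hmax⟩ := Finset.exists_max_image _ α hS
    simp only [Finset.mem_filter, Finset.mem_univ, true_and] at he₀ hmax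
    have hsum : ∑ e : F, α e * max 0 (-(H e)) ≤ ∑ e : F, α e₀ * max 0 (-(H e)) := by
      apply Finset.sum_le_sum
      intro e _
      rcases lt_or_ge (H e) 0 with he | he
      · exact mul_le_mul_of_nonneg_right (hmax e he) (le_max_left _ _)
      · have : max 0 (-(H e)) = 0 := max_eq_left (by linarith)
        simp [this]
    calc τ * ∑ e : F, α e * max 0 (-(H e))
        ≤ τ * ∑ e : F, α e₀ * max 0 (-(H e)) :=
          mul_le_mul_of_nonneg_left hsum hτ
      _ = α e₀ * (τ * ∑ e' : F, max 0 (-(H e'))) := by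
          rw [← Finset.mul_sum]; ring
      _ ≤ Q := h e₀ he₀
  · have : ∀ e : F, α e * max 0 (-(H e)) = 0 := by
      intro e
      have he : ¬ H e < 0 := fun h' => hS ⟨e, by simp [h']⟩
      have : max 0 (-(H e)) = 0 := max_eq_left (by linarith [not_lt.mp he])
      simp [this]
    simp [this, hQ]

/-- One step of the flux limiter (no wells) is bound preserving. -/
theorem flux_limited_update_bound_preserving
    {F : Type*} [Fintype F] [Nonempty F]
    (H : F → ℝ) (τ φ m sLo sHi s : ℝ)
    (hτ : 0 < τ) (hφ : 0 < φ) (hm : 0 < m)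
    (hsLo : sLo ≤ s) (hsHi : s ≤ sHi)
    (α : F → ℝ)
    (hα0 : ∀ e, 0 ≤ α e) (hα1 : ∀ e, α e ≤ 1)
    (hPlus : ∀ e, H e < 0 →
      α e * (τ * ∑ e' : F, max 0 (-(H e'))) ≤ m * φ * (sHi - s))
    (hMinus : ∀ e, 0 < H e →
      m * φ * (sLo - s) ≤ α e * (τ * ∑ e' : F, min 0 (-(H e')))) :
    sLo ≤ s - (τ / (φ * m)) * ∑ e : F, α e * H e ∧
      s - (τ / (φ * m)) * ∑ e : F, α e * H e ≤ sHi := by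
  have hmaxmin : ∀ x : ℝ, max 0 x = - min 0 (-x) := by
    intro x
    rcases le_total 0 x with h | h
    · rw [max_eq_right h, min_eq_right (neg_nonpos.mpr h), neg_neg]
    · rw [max_eq_left h, min_eq_left (neg_nonneg.mpr h), neg_zero]
  have hQU : 0 ≤ m * φ * (sHi - s) :=
    mul_nonneg (mul_nonneg hm.le hφ.le) (by linarith)
  have hQL : 0 ≤ m * φ * (s - sLo) :=
    mul_nonneg (mul_nonneg hm.le hφ.le) (by linarith)
  -- Upper bound part: τ * Σ α max0(-H) ≤ m φ (sHi - s)
  have hU : τ * ∑ e : F, α e * max 0 (-(H e)) ≤ m * φ * (sHi - s) :=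
    flux_key H α τ _ hτ.le hQU hPlus
  -- Lower bound part: apply key to -H
  have hL : τ * ∑ e : F, α e * max 0 (-(-H e)) ≤ m * φ * (s - sLo) := by
    apply flux_key (fun e => -H e) α τ _ hτ.le hQL
    intro e he
    have h1 := hMinus e (by simpa using he)
    have hsum : (∑ e' : F, max 0 (-(-H e'))) = - ∑ e' : F, min 0 (-(H e')) := by
      rw [← Finset.sum_neg_distrib]
      exact Finset.sum_congr rfl fun e' _ => by rw [neg_neg]; exact hmaxmin (H e')
    rw [hsum]
    nlinarith [hα0 e]
  -- pointwise bounds on α e * H e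
  have hlow : ∀ e : F, -(α e * max 0 (-(H e))) ≤ α e * H e := by
    intro e
    have h0 : -(max 0 (-(H e))) ≤ H e := by
      rcases le_total 0 (H e) with h | h
      · have : max 0 (-(H e)) = 0 := max_eq_left (by linarith)
        rw [this]; linarith
      · have : max 0 (-(H e)) = -(H e) := max_eq_right (by linarith)
        rw [this]; linarith
    have := mul_le_mul_of_nonneg_left h0 (hα0 e)
    rw [mul_neg] at this
    linarith
  have hhigh : ∀ e : F, α e * H e ≤ α e * max 0 (-(-H e)) := by
    intro e
    have h0 : H e ≤ max 0 (-(-H e)) := by rw [neg_neg]; exact le_max_right _ _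
    exact mul_le_mul_of_nonneg_left h0 (hα0 e)
  have hS1 : -(m * φ * (sHi - s)) ≤ τ * ∑ e : F, α e * H e := by
    have h2 : ∑ e : F, -(α e * max 0 (-(H e))) ≤ ∑ e : F, α e * H e :=
      Finset.sum_le_sum fun e _ => hlow e
    rw [Finset.sum_neg_distrib] at h2
    have h3 := mul_le_mul_of_nonneg_left h2 hτ.le
    rw [mul_neg] at h3
    linarith
  have hS2 : τ * ∑ e : F, α e * H e ≤ m * φ * (s - sLo) := by
    have h2 : ∑ e : F, α e * H e ≤ ∑ e : F, α e * max 0 (-(-H e)) :=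
      Finset.sum_le_sum fun e _ => hhigh e
    have h3 := mul_le_mul_of_nonneg_left h2 hτ.le
    linarith
  have hφm : 0 < φ * m := mul_pos hφ hm
  constructor
  · have : (τ / (φ * m)) * ∑ e : F, α e * H e ≤ s - sLo := by
      rw [div_mul_eq_mul_div, div_le_iff₀ hφm]
      nlinarith
    linarith
  · have : -(sHi - s) ≤ (τ / (φ * m)) * ∑ e : F, α e * H e := by
      rw [div_mul_eq_mul_div, le_div_iff₀ hφm]
      nlinarith
    linarith
end

section
/- Let F be a nonempty finite set, τ > 0, φ > 0, m > 0, and s_* ≤ s^* real numbers. Let (s_k)_{k≥0} be a real sequence, (H_k)_{k≥0} a sequence of functions F → ℝ, and (α_k)_{k≥1} a sequence of functions F → ℝ such that for every k ≥ 1: (i) 0 ≤ α_k(e) ≤ 1 for all e ∈ F; (ii) setting P⁺_{k−1} = τ·Σ_{e∈F} max(0, −H_{k−1}(e)), P⁻_{k−1} = τ·Σ_{e∈F} min(0, −H_{k−1}(e)), Q⁺_{k−1} = m·φ·(s^* − s_{k−1}) and Q⁻_{k−1} = m·φ·(s_* − s_{k−1}), one has α_k(e)·P⁺_{k−1} ≤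 Q⁺_{k−1} whenever H_{k−1}(e) < 0 and α_k(e)·P⁻_{k−1} ≥ Q⁻_{k−1} whenever H_{k−1}(e) > 0; and (iii) s_k = s_{k−1} − (τ/(φ·m))·Σ_{e∈F} α_k(e)·H_{k−1}(e). If s_* ≤ s_0 ≤ s^*, then s_* ≤ s_k ≤ s^* for every k ≥ 0. -/
/-- Auxiliary: if `g ≥ 0`, `a ≥ 0`, `Q ≥ 0`, and for every `e` with `g e > 0`
we have `a e * (τ * ∑ g) ≤ Q`, then `τ * ∑ a e * g e ≤ Q`. -/
lemma flux_limiter_aux {F : Type*} [Fintype F] (τ Q : ℝ) (hτ : 0 < τ) (hQ : 0 ≤ Q)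
    (g a : F → ℝ) (hg : ∀ e, 0 ≤ g e) (ha : ∀ e, 0 ≤ a e)
    (h : ∀ e, 0 < g e → a e * (τ * ∑ e', g e') ≤ Q) :
    τ * ∑ e, a e * g e ≤ Q := by
  set P : ℝ := τ * ∑ e, g e with hP
  have hsumg : 0 ≤ ∑ e, g e := Finset.sum_nonneg fun e _ => hg e
  rcases eq_or_lt_of_le hsumg with hzero | hpos
  · have hall : ∀ e ∈ Finset.univ, g e = 0 :=
      (Finset.sum_eq_zero_iff_of_nonneg (fun e _ => hg e)).mp hzero.symm
    have : ∑ e, a e * g e = 0 := Finset.sum_eq_zero fun e he => by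
      rw [hall e he, mul_zero]
    rw [this, mul_zero]; exact hQ
  · have hPpos : 0 < P := by positivity
    have sumkey : P * ∑ e, a e * g e ≤ Q * ∑ e, g e := by
      rw [Finset.mul_sum, Finset.mul_sum]
      apply Finset.sum_le_sum
      intro e _
      rcases eq_or_lt_of_le (hg e) with hz | hgz
      · rw [← hz]; simp
      · have h2 : a e * P ≤ Q := h e hgz
        calc P * (a e * g e) = (a e * P) * g e := by ring
          _ ≤ Q * g e := mul_le_mul_of_nonneg_right h2 (hg e)
    have hPQ : Q * ∑ e, g e = Q * P / τ := by
      rw [hP]; field_simp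
    rw [hPQ] at sumkey
    have hτS : τ * (∑ e, a e * g e) * P ≤ Q * P := by
      calc τ * (∑ e, a e * g e) * P = τ * (P * ∑ e, a e * g e) := by ring
        _ ≤ τ * (Q * P / τ) := by
            exact mul_le_mul_of_nonneg_left sumkey hτ.le
        _ = Q * P := by field_simp
    exact le_of_mul_le_mul_right hτS hPpos

/-- Every iterate of the flux-limiter algorithm (no wells)
stays in the physical interval `[sLo, sHi]`. -/
theorem flux_limiter_iterates_bound_preserving
    {F : Type*} [Fintype F] [Nonempty F]
    (τ φ m sLo sHi : ℝ)
    (hτ : 0 < τ) (hφ : 0 < φ) (hm : 0 < m) (hbounds : sLo ≤ sHi)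
    (s : ℕ → ℝ) (H : ℕ → F → ℝ) (α : ℕ → F → ℝ)
    (hα0 : ∀ k, 1 ≤ k → ∀ e, 0 ≤ α k e)
    (hα1 : ∀ k, 1 ≤ k → ∀ e, α k e ≤ 1)
    (hPlus : ∀ k, 1 ≤ k → ∀ e, H (k - 1) e < 0 →
      α k e * (τ * ∑ e' : F, max 0 (-(H (k - 1) e'))) ≤ m * φ * (sHi - s (k - 1)))
    (hMinus : ∀ k, 1 ≤ k → ∀ e, 0 < H (k - 1) e →
      m * φ * (sLo - s (k - 1)) ≤ α k e * (τ * ∑ e' : F, min 0 (-(H (k - 1) e'))))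
    (hupd : ∀ k, 1 ≤ k →
      s k = s (k - 1) - (τ / (φ * m)) * ∑ e : F, α k e * H (k - 1) e)
    (h0 : sLo ≤ s 0 ∧ s 0 ≤ sHi) :
    ∀ k, sLo ≤ s k ∧ s k ≤ sHi := by
  intro k
  induction k with
  | zero => exact h0
  | succ n ih =>
    have hk1 : 1 ≤ n + 1 := Nat.le_add_left 1 n
    have hs : s (n + 1) = s n - (τ / (φ * m)) * ∑ e : F, α (n+1) e * H n e := by
      simpa using hupd (n + 1) hk1
    have hdecomp : ∑ e : F, α (n+1) e * H n e
        = -((∑ e : F, α (n+1) e * max 0 (-(H n e)))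
          + (∑ e : F, α (n+1) e * min 0 (-(H n e)))) := by
      rw [← Finset.sum_add_distrib, ← Finset.sum_neg_distrib]
      apply Finset.sum_congr rfl
      intro e _
      have hmm : max 0 (-(H n e)) + min 0 (-(H n e)) = -(H n e) := by
        rcases le_total (H n e) 0 with h | h
        · rw [max_eq_right (by linarith), min_eq_left (by linarith)]; ring
        · rw [max_eq_left (by linarith), min_eq_right (by linarith)]; ring
      linear_combination (α (n+1) e) * hmm
    set A : ℝ := ∑ e : F, α (n+1) e * max 0 (-(H n e)) with hA
    set B : ℝ := ∑ e : F, α (n+1) e * min 0 (-(H n e)) with hB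
    have hA0 : 0 ≤ A :=
      Finset.sum_nonneg fun e _ => mul_nonneg (hα0 (n+1) hk1 e) (le_max_left 0 _)
    have hB0 : B ≤ 0 :=
      Finset.sum_nonpos fun e _ =>
        mul_nonpos_of_nonneg_of_nonpos (hα0 (n+1) hk1 e) (min_le_left 0 _)
    have hQp : 0 ≤ m * φ * (sHi - s n) :=
      mul_nonneg (mul_pos hm hφ).le (sub_nonneg.mpr ih.2)
    have hQm : 0 ≤ -(m * φ * (sLo - s n)) := by
      nlinarith [mul_nonneg (mul_pos hm hφ).le (sub_nonneg.mpr ih.1)]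
    -- upper bound: τ * A ≤ m * φ * (sHi - s n)
    have hup : τ * A ≤ m * φ * (sHi - s n) := by
      apply flux_limiter_aux τ _ hτ hQp _ _
        (fun e => le_max_left 0 _) (hα0 (n+1) hk1)
      intro e hge
      have hHe : H n e < 0 := by
        by_contra h'
        push_neg at h'
        have : max 0 (-(H n e)) = 0 := max_eq_left (by linarith)
        linarith
      simpa using hPlus (n+1) hk1 e hHe
    -- lower bound: m * φ * (sLo - s n) ≤ τ * B
    have hlo : m * φ * (sLo - s n) ≤ τ * B := by
      have haux := flux_limiter_aux τ (-(m * φ * (sLo - s n))) hτ hQm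
        (fun e => -(min 0 (-(H n e)))) (α (n+1))
        (fun e => by simp only [neg_nonneg]; exact min_le_left 0 _)
        (hα0 (n+1) hk1) ?_
      · have heq : ∑ e : F, α (n+1) e * -(min 0 (-(H n e))) = -B := by
          rw [hB, ← Finset.sum_neg_distrib]
          apply Finset.sum_congr rfl; intro e _; ring
        rw [heq] at haux
        linarith
      · intro e hge
        have hge' : 0 < -(min 0 (-(H n e))) := hge
        have hHe : 0 < H n e := by
          by_contra h'
          push_neg at h'
          have : min 0 (-(H n e)) = 0 := min_eq_left (by linarith)
          rw [this] at hge'; simp at hge'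
        have h1 := hMinus (n+1) hk1 e hHe
        simp only [Nat.add_sub_cancel] at h1
        have heq2 : (∑ e' : F, -(min 0 (-(H n e')))) = -∑ e' : F, min 0 (-(H n e')) :=
          Finset.sum_neg_distrib _
        rw [heq2]
        nlinarith [h1]
    -- combine
    have hφm : 0 < φ * m := mul_pos hφ hm
    have key : (s (n+1) - s n) * (φ * m) = τ * (A + B) := by
      rw [hs, hdecomp]; field_simp; ring
    constructor
    · nlinarith [hlo, hA0, mul_nonneg hτ.le hA0]
    · nlinarith [hup, hB0, mul_nonpos_of_nonneg_of_nonpos hτ.le hB0]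
end

section
/- Let n ≥ 1 and, for each i ∈ {0,…,n−1}, let u_i ∈ ℝ (the unlimited values of a linear reconstruction at the vertices of a mesh element), and let m_i, M_i ∈ ℝ be local bounds satisfying m_i ≤ S̄ ≤ M_i, where S̄ ∈ ℝ is the cell average. For each i define β_i = (M_i − S̄)/(u_i − S̄) if u_i > M_i, β_i = 1 if m_i ≤ u_i ≤ M_i, and β_i = (m_i − S̄)/(u_i − S̄) if u_i < m_i; and set β = min_i β_i. Then 0 ≤ β ≤ 1 and for every i, m_i ≤ S̄ + β·(u_i − S̄) ≤ M_i. -/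
/-- The vertex-based slope limiter correction factor lies in
`[0,1]` and enforces the local bounds at all vertices. -/
theorem vertex_slope_limiter_bounds
    (n : ℕ) (hn : 1 ≤ n) (u mLo MHi : Fin n → ℝ) (Sbar : ℝ)
    (hLo : ∀ i, mLo i ≤ Sbar) (hHi : ∀ i, Sbar ≤ MHi i)
    (βv : Fin n → ℝ)
    (hβv : ∀ i, βv i =
      if MHi i < u i then (MHi i - Sbar) / (u i - Sbar)
      else if u i < mLo i then (mLo i - Sbar) / (u i - Sbar)
      else 1)
    (β : ℝ)
    (hβ : β = Finset.univ.inf' ⟨⟨0, hn⟩, Finset.mem_univ _⟩ βv) :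
    (0 ≤ β ∧ β ≤ 1) ∧
      ∀ i, mLo i ≤ Sbar + β * (u i - Sbar) ∧ Sbar + β * (u i - Sbar) ≤ MHi i := by
  have hrange : ∀ i, 0 ≤ βv i ∧ βv i ≤ 1 := by
    intro i
    rw [hβv i]
    split_ifs with h1 h2
    · have hd : 0 < u i - Sbar := by linarith [hHi i]
      constructor
      · exact div_nonneg (by linarith [hHi i]) hd.le
      · rw [div_le_one hd]; linarith
    · have hd : 0 < Sbar - u i := by linarith [hLo i]
      have he : (mLo i - Sbar) / (u i - Sbar) = (Sbar - mLo i) / (Sbar - u i) := by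
        rw [show mLo i - Sbar = -(Sbar - mLo i) by ring,
            show u i - Sbar = -(Sbar - u i) by ring, neg_div_neg_eq]
      rw [he]
      constructor
      · exact div_nonneg (by linarith [hLo i]) hd.le
      · rw [div_le_one hd]; linarith
    · exact ⟨one_pos.le, le_refl 1⟩
  have hβle : ∀ i, β ≤ βv i := by
    intro i
    rw [hβ]
    exact Finset.inf'_le _ (Finset.mem_univ i)
  have hβ0 : 0 ≤ β := by
    rw [hβ]
    exact Finset.le_inf' _ _ (fun i _ => (hrange i).1)
  have hβ1 : β ≤ 1 := le_trans (hβle ⟨0, hn⟩) (hrange ⟨0, hn⟩).2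
  refine ⟨⟨hβ0, hβ1⟩, fun i => ?_⟩
  have hv := hβv i
  split_ifs at hv with h1 h2
  · -- u i > MHi i
    have hd : 0 < u i - Sbar := by linarith [hHi i]
    have hkey : βv i * (u i - Sbar) = MHi i - Sbar := by
      rw [hv, div_mul_cancel₀]
      exact ne_of_gt hd
    constructor
    · nlinarith [mul_nonneg hβ0 hd.le, hLo i]
    · nlinarith [mul_le_mul_of_nonneg_right (hβle i) hd.le]
  · -- u i < mLo i
    have hd : u i - Sbar < 0 := by linarith [hLo i]
    have hkey : βv i * (u i - Sbar) = mLo i - Sbar := by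
      rw [hv, div_mul_cancel₀]
      exact ne_of_lt hd
    constructor
    · nlinarith [mul_le_mul_of_nonpos_right (hβle i) hd.le]
    · nlinarith [mul_nonneg hβ0 (neg_nonneg.2 hd.le), hHi i]
  · -- mLo i ≤ u i ≤ MHi i
    have hmu : mLo i ≤ u i := le_of_not_gt h2
    have huM : u i ≤ MHi i := le_of_not_gt h1
    constructor
    · nlinarith [mul_nonneg hβ0 (sub_nonneg.2 hmu),
        mul_nonneg (sub_nonneg.2 hβ1) (sub_nonneg.2 (hLo i))]
    · nlinarith [mul_nonneg hβ0 (sub_nonneg.2 huM),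
        mul_nonneg (sub_nonneg.2 hβ1) (sub_nonneg.2 (hHi i))]
end
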